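/- Theorem 3.1, direction (ii) ⇒ (i) and (iii): Suppose κ_k > 0 for all k, and suppose P : ℤ^d_{≥0} × [0,∞) → ℝ is a solution of the chemical master equation such that there is a function c : [0,∞) → ℝ^d_{>0} with P(x,t) = ∏_{i=1}^d e^{−c_i(t)} c_i(t)^{x_i}/x_i! for all x ∈ ℤ^d_{≥0} and t ≥ 0. Then c is differentiable, c solves the mass-action ODE c'(t) = Σ_k κ_k c(t)^{y_k} ζ_k, and c satisfies the DR condition. -/

import Mathlib

open Finset

/-- Monomial `u^v = ∏ i, u i ^ v i` (with the convention `0^0 = 1`). -/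
noncomputable def monPow {d : ℕ} (u : Fin d → ℝ) (v : Fin d → ℕ) : ℝ :=
  ∏ i, u i ^ v i

/-- The reaction vector `ζ = y' - y`, viewed as a real vector. -/
def zetaVec {d : ℕ} (y y' : Fin d → ℕ) : Fin d → ℝ :=
  fun i => (y' i : ℝ) - (y i : ℝ)

/-- Stochastic mass action intensity `λ_k(x) = κ_k ∏_i x_i!/(x_i - y_{ki})!`,
taken to be `0` when `x` is not componentwise at least `y_k`. -/
noncomputable def intensity {d : ℕ} (κk : ℝ) (yk : Fin d → ℕ) (x : Fin d → ℕ) : ℝ :=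
  κk * ∏ i, ((x i).descFactorial (yk i) : ℝ)

/-- Right-hand side of the deterministic mass-action ODE: `Σ_k κ_k c^{y_k} ζ_k`. -/
noncomputable def massActionRHS {d K : ℕ} (κ : Fin K → ℝ) (y y' : Fin K → Fin d → ℕ)
    (c : Fin d → ℝ) : Fin d → ℝ :=
  ∑ k, (κ k * monPow c (y k)) • zetaVec (y k) (y' k)

/-- `c` is differentiable on `[0,∞)` and solves the mass-action ODE there. -/
def solvesMassAction {d K : ℕ} (κ : Fin K → ℝ) (y y' : Fin K → Fin d → ℕ)
    (c : ℝ → Fin d → ℝ) : Prop :=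
  ∀ t ≥ (0:ℝ), HasDerivWithinAt c (massActionRHS κ y y' (c t)) (Set.Ici 0) t

/-- The dynamical and restricted (DR) complex balance condition: for every complex `z`
with `‖z‖₁ ≥ 2` and every `t ≥ 0`,
`Σ_{k : y_k = z} κ_k c(t)^z = Σ_{k : y'_k = z} κ_k c(t)^{y_k}`. -/
def DRcondition {d K : ℕ} (κ : Fin K → ℝ) (y y' : Fin K → Fin d → ℕ)
    (c : ℝ → Fin d → ℝ) : Prop :=
  ∀ z : Fin d → ℕ, 2 ≤ ∑ i, z i → ∀ t ≥ (0:ℝ),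
    ∑ k ∈ univ.filter (fun k => y k = z), κ k * monPow (c t) z
      = ∑ k ∈ univ.filter (fun k => y' k = z), κ k * monPow (c t) (y k)

/-- `P` solves the chemical master equation on `[0,∞)`:
`∂ₜ P(x,t) = Σ_k λ_k(x-ζ_k) P(x-ζ_k,t) 1{x-ζ_k ≥ 0} - Σ_k λ_k(x) P(x,t)`. -/
def solvesCME {d K : ℕ} (κ : Fin K → ℝ) (y y' : Fin K → Fin d → ℕ)
    (P : (Fin d → ℕ) → ℝ → ℝ) : Prop :=
  ∀ x : Fin d → ℕ, ∀ t ≥ (0:ℝ),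
    HasDerivWithinAt (P x)
      ((∑ k, if ∀ i, y' k i ≤ x i + y k i then
          intensity (κ k) (y k) (fun i => x i + y k i - y' k i)
            * P (fun i => x i + y k i - y' k i) t
        else 0)
       - ∑ k, intensity (κ k) (y k) x * P x t)
      (Set.Ici 0) t

/-- The product-Poisson probability mass function `∏_i e^{-c_i} c_i^{x_i}/x_i!`. -/
noncomputable def productPoisson {d : ℕ} (c : Fin d → ℝ) (x : Fin d → ℕ) : ℝ :=
  ∏ i, Real.exp (-(c i)) * (c i) ^ (x i) / (x i).factorial

/-! ### Auxiliary definitions and lemmas -/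

noncomputable def fallPow {d : ℕ} (x v : Fin d → ℕ) : ℝ :=
  ∏ i, ((x i).descFactorial (v i) : ℝ)

def eV {d : ℕ} (i : Fin d) : Fin d → ℕ := fun j => if j = i then 1 else 0

lemma eV_inj {d : ℕ} {i j : Fin d} (h : eV i = eV j) : i = j := by
  by_contra hc
  have := congrFun h i
  simp [eV, hc] at this

lemma sum_eV {d : ℕ} (i : Fin d) : ∑ j, eV i j = 1 := by
  simp [eV]

lemma fallPow_eq_zero {d : ℕ} {x v : Fin d → ℕ} (i : Fin d) (h : x i < v i) :
    fallPow x v = 0 := by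
  refine Finset.prod_eq_zero (mem_univ i) ?_
  rw [Nat.descFactorial_eq_zero_iff_lt.2 h]; norm_num

lemma fallPow_self_pos {d : ℕ} (x : Fin d → ℕ) : 0 < fallPow x x := by
  refine Finset.prod_pos fun i _ => ?_
  rw [Nat.descFactorial_self]
  exact_mod_cast (x i).factorial_pos

lemma fallPow_eV {d : ℕ} (x : Fin d → ℕ) (i : Fin d) : fallPow x (eV i) = (x i : ℝ) := by
  unfold fallPow
  rw [Finset.prod_eq_single i]
  · simp [eV]
  · intro j _ hj
    simp [eV, hj]
  · intro h; exact absurd (mem_univ i) h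

lemma fallPow_zeroFun {d : ℕ} (x : Fin d → ℕ) : fallPow x (fun _ => 0) = 1 := by
  simp [fallPow]

lemma monPow_eV {d : ℕ} (c : Fin d → ℝ) (i : Fin d) : monPow c (eV i) = c i := by
  unfold monPow
  rw [Finset.prod_eq_single i]
  · simp [eV]
  · intro j _ hj
    simp [eV, hj]
  · intro h; exact absurd (mem_univ i) h

lemma fallPow_indep {d : ℕ} (S : Finset (Fin d → ℕ)) (a : (Fin d → ℕ) → ℝ)
    (h : ∀ x : Fin d → ℕ, ∑ z ∈ S, a z * fallPow x z = 0) :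
    ∀ z ∈ S, a z = 0 := by
  by_contra hc
  push_neg at hc
  obtain ⟨z₀, hz₀S, hz₀⟩ := hc
  classical
  set T := S.filter (fun z => a z ≠ 0) with hT
  have hTne : T.Nonempty := ⟨z₀, by simp [hT, hz₀S, hz₀]⟩
  obtain ⟨w, hwT, hwmin⟩ := T.exists_min_image (fun z => ∑ i, z i) hTne
  have hwS : w ∈ S := (Finset.mem_filter.1 hwT).1
  have hwa : a w ≠ 0 := (Finset.mem_filter.1 hwT).2
  have := h w
  rw [Finset.sum_eq_single w] at this
  · exact hwa (by
      have := mul_eq_zero.1 this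
      rcases this with h1 | h2
      · exact h1
      · exact absurd h2 (ne_of_gt (fallPow_self_pos w)))
  · intro z hzS hzw
    by_cases haz : a z = 0
    · simp [haz]
    · have hzT : z ∈ T := Finset.mem_filter.2 ⟨hzS, haz⟩
      have hle : ∑ i, w i ≤ ∑ i, z i := hwmin z hzT
      by_cases hcomp : ∀ i, z i ≤ w i
      · have hsum : ∑ i, z i ≤ ∑ i, w i := Finset.sum_le_sum fun i _ => hcomp i
        have : z = w := funext fun i =>
          le_antisymm (hcomp i)
            (by
              by_contra hlt
              push_neg at hlt
              have : ∑ i, z i < ∑ i, w i :=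
                Finset.sum_lt_sum (fun j _ => hcomp j) ⟨i, mem_univ i, hlt⟩
              omega)
        exact absurd this hzw
      · push_neg at hcomp
        obtain ⟨i, hi⟩ := hcomp
        rw [fallPow_eq_zero i (by omega), mul_zero]
  · intro h; exact absurd hwS h

lemma monPow_pos {d : ℕ} {c : Fin d → ℝ} (hc : ∀ i, 0 < c i) (v : Fin d → ℕ) :
    0 < monPow c v :=
  Finset.prod_pos fun i _ => pow_pos (hc i) _

lemma productPoisson_pos {d : ℕ} {c : Fin d → ℝ} (hc : ∀ i, 0 < c i) (x : Fin d → ℕ) :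
    0 < productPoisson c x :=
  Finset.prod_pos fun i _ => div_pos (mul_pos (Real.exp_pos _) (pow_pos (hc i) _))
    (by exact_mod_cast (x i).factorial_pos)

/-- The key algebraic identity for each CME gain term. -/
lemma gain_term_eq {d : ℕ} (κk : ℝ) (yk y'k x : Fin d → ℕ) {c : Fin d → ℝ}
    (hc : ∀ i, 0 < c i) :
    (if ∀ i, y'k i ≤ x i + yk i then
        intensity κk yk (fun i => x i + yk i - y'k i)
          * productPoisson c (fun i => x i + yk i - y'k i)
      else 0)
    = κk * (monPow c yk / monPow c y'k) * fallPow x y'k * productPoisson c x := by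
  by_cases hcond : ∀ i, y'k i ≤ x i + yk i
  · rw [if_pos hcond]
    unfold intensity productPoisson monPow fallPow
    rw [mul_assoc, mul_assoc, mul_assoc]
    congr 1
    rw [div_eq_mul_inv, ← Finset.prod_inv_distrib, ← Finset.prod_mul_distrib,
      ← Finset.prod_mul_distrib, ← Finset.prod_mul_distrib, ← Finset.prod_mul_distrib]
    refine Finset.prod_congr rfl fun i _ => ?_
    simp only
    set n := x i; set a := yk i; set b := y'k i
    have hba : b ≤ n + a := hcond i
    by_cases hbn : b ≤ n
    · have ham : a ≤ n + a - b := by omega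
      have h1 : ((n + a - b) - a).factorial * (n + a - b).descFactorial a = (n + a - b).factorial :=
        Nat.factorial_mul_descFactorial ham
      have h2 : (n-b).factorial * n.descFactorial b = n.factorial := Nat.factorial_mul_descFactorial hbn
      have hnb : (n + a - b) - a = n - b := by omega
      rw [hnb] at h1
      have hcne : c i ≠ 0 := ne_of_gt (hc i)
      have hfac1 : (((n + a - b).factorial) : ℝ) ≠ 0 := by exact_mod_cast (n + a - b).factorial_ne_zero
      have hfac2 : ((n.factorial) : ℝ) ≠ 0 := by exact_mod_cast n.factorial_ne_zero
      have hfac3 : (((n-b).factorial) : ℝ) ≠ 0 := by exact_mod_cast (n - b).factorial_ne_zero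
      have h1' : (((n-b).factorial) : ℝ) * ((n + a - b).descFactorial a : ℝ) = (((n + a - b).factorial) : ℝ) := by
        exact_mod_cast h1
      have h2' : (((n-b).factorial) : ℝ) * (n.descFactorial b : ℝ) = ((n.factorial) : ℝ) := by
        exact_mod_cast h2
      have hpow : c i ^ (n + a - b) * c i ^ b = c i ^ n * c i ^ a := by
        rw [← pow_add, ← pow_add]; congr 1; omega
      field_simp
      refine mul_left_cancel₀ hfac3 ?_
      linear_combination (c i ^ (n + a - b) * c i ^ b * ((n.factorial : ℝ))) * h1'
        - (c i ^ a * c i ^ n * (((n + a - b).factorial : ℝ))) * h2'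
        + (((n.factorial : ℝ)) * (((n + a - b).factorial : ℝ))) * hpow
    · have hm : n + a - b < a := by omega
      rw [Nat.descFactorial_eq_zero_iff_lt.2 hm, Nat.descFactorial_eq_zero_iff_lt.2 (by omega : n < b)]
      push_cast
      ring
  · rw [if_neg hcond]
    push_neg at hcond
    obtain ⟨i, hi⟩ := hcond
    have : fallPow x y'k = 0 := by
      refine Finset.prod_eq_zero (mem_univ i) ?_
      rw [Nat.descFactorial_eq_zero_iff_lt.2 (by omega)]; norm_num
    rw [this]; ring

lemma productPoisson_exp_form {d : ℕ} {c : Fin d → ℝ} (hc : ∀ i, 0 < c i) (x : Fin d → ℕ) :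
    productPoisson c x
      = Real.exp (∑ i, ((x i : ℝ) * Real.log (c i) - c i)) * (∏ i, ((x i).factorial : ℝ))⁻¹ := by
  rw [Real.exp_sum, ← Finset.prod_inv_distrib, ← Finset.prod_mul_distrib]
  refine Finset.prod_congr rfl fun i _ => ?_
  rw [Real.exp_sub, Real.exp_nat_mul, Real.exp_log (hc i), Real.exp_neg]
  ring

lemma productPoisson_eV {d : ℕ} {c : Fin d → ℝ} (i : Fin d) :
    productPoisson c (eV i) = c i * productPoisson c (fun _ => 0) := by
  unfold productPoisson eV
  have h : ∀ j : Fin d,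
      Real.exp (-(c j)) * c j ^ (if j = i then 1 else 0) / ((Nat.factorial (if j = i then 1 else 0)) : ℝ)
      = (if j = i then c j else 1) * (Real.exp (-(c j)) * c j ^ (0:ℕ) / ((Nat.factorial 0 : ℕ) : ℝ)) := by
    intro j
    by_cases hj : j = i <;> simp [hj, mul_comm]
  simp only [h]
  rw [Finset.prod_mul_distrib, Finset.prod_ite_eq' univ i (fun j => c j)]
  simp
/-- Theorem 3.1, (ii) ⇒ (i) and (iii): if a solution of the chemical master equation is a
product of Poissons with mean vector `c(t) > 0` for all `t ≥ 0`, then `c` is differentiable,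
solves the mass-action ODE, and satisfies the DR condition. -/
theorem productPoisson_solution_implies_massAction_and_DR
    {d K : ℕ} (κ : Fin K → ℝ) (y y' : Fin K → Fin d → ℕ)
    (hκ : ∀ k, 0 < κ k) (hyy' : ∀ k, y' k ≠ y k)
    (P : (Fin d → ℕ) → ℝ → ℝ) (c : ℝ → Fin d → ℝ)
    (hcpos : ∀ t ≥ (0:ℝ), ∀ i, 0 < c t i)
    (hCME : solvesCME κ y y' P)
    (hPoisson : ∀ x : Fin d → ℕ, ∀ t ≥ (0:ℝ), P x t = productPoisson (c t) x) :
    solvesMassAction κ y y' c ∧ DRcondition κ y y' c := by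
  classical
  -- Step 1: rewrite the CME right-hand side using the product-Poisson form.
  have hB : ∀ x : Fin d → ℕ, ∀ t ≥ (0:ℝ), HasDerivWithinAt (P x)
      ((∑ k, κ k * ((monPow (c t) (y k) / monPow (c t) (y' k)) * fallPow x (y' k)
          - fallPow x (y k))) * productPoisson (c t) x)
      (Set.Ici 0) t := by
    intro x t ht
    have h := hCME x t ht
    have hval : ((∑ k, if ∀ i, y' k i ≤ x i + y k i then
          intensity (κ k) (y k) (fun i => x i + y k i - y' k i)
            * P (fun i => x i + y k i - y' k i) t
        else 0)
       - ∑ k, intensity (κ k) (y k) x * P x t)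
        = (∑ k, κ k * ((monPow (c t) (y k) / monPow (c t) (y' k)) * fallPow x (y' k)
            - fallPow x (y k))) * productPoisson (c t) x := by
      rw [Finset.sum_mul, ← Finset.sum_sub_distrib]
      refine Finset.sum_congr rfl fun k _ => ?_
      rw [hPoisson (fun i => x i + y k i - y' k i) t ht, hPoisson x t ht,
        gain_term_eq (κ k) (y k) (y' k) x (hcpos t ht)]
      have hint : intensity (κ k) (y k) x = κ k * fallPow x (y k) := rfl
      rw [hint]
      ring
    exact hval ▸ h
  -- The finite set of relevant complexes.
  set S : Finset (Fin d → ℕ) :=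
    ((univ.image y ∪ univ.image y') ∪ univ.image eV) ∪ {fun _ => 0} with hSdef
  have hyS : ∀ k, y k ∈ S := fun k => by
    simp only [hSdef, Finset.mem_union]
    exact Or.inl (Or.inl (Or.inl (Finset.mem_image_of_mem y (mem_univ k))))
  have hy'S : ∀ k, y' k ∈ S := fun k => by
    simp only [hSdef, Finset.mem_union]
    exact Or.inl (Or.inl (Or.inr (Finset.mem_image_of_mem y' (mem_univ k))))
  have heVS : ∀ i, eV i ∈ S := fun i => by
    simp only [hSdef, Finset.mem_union]
    exact Or.inl (Or.inr (Finset.mem_image_of_mem eV (mem_univ i)))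
  have hz0S : (fun _ => 0 : Fin d → ℕ) ∈ S := by
    simp only [hSdef, Finset.mem_union]
    exact Or.inr (Finset.mem_singleton_self _)
  -- Main pointwise analysis at each time t ≥ 0.
  have main : ∀ t, 0 ≤ t →
      HasDerivWithinAt c (massActionRHS κ y y' (c t)) (Set.Ici 0) t ∧
      (∀ z : Fin d → ℕ, 2 ≤ ∑ i, z i →
        ∑ k ∈ univ.filter (fun k => y k = z), κ k * monPow (c t) z
          = ∑ k ∈ univ.filter (fun k => y' k = z), κ k * monPow (c t) (y k)) := by
    intro t ht
    have ht' : t ∈ Set.Ici (0:ℝ) := Set.mem_Ici.2 ht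
    -- Step 2: differentiability of c
    have hcD : ∀ i : Fin d, ∃ gi : ℝ, HasDerivWithinAt (fun s => c s i) gi (Set.Ici 0) t := by
      intro i
      have h1 := hB (eV i) t ht
      have h2 := hB (fun _ => 0) t ht
      have hne : P (fun _ => 0) t ≠ 0 := by
        rw [hPoisson _ t ht]
        exact ne_of_gt (productPoisson_pos (hcpos t ht) _)
      refine ⟨_, (h1.div h2 hne).congr (fun s hs => ?_) ?_⟩
      · have hs' : s ≥ (0:ℝ) := hs
        rw [Pi.div_apply, hPoisson (eV i) s hs', hPoisson (fun _ => 0) s hs', productPoisson_eV,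
          mul_div_assoc, div_self (ne_of_gt (productPoisson_pos (hcpos s hs') _)), mul_one]
      · rw [Pi.div_apply, hPoisson (eV i) t ht, hPoisson (fun _ => 0) t ht, productPoisson_eV,
          mul_div_assoc, div_self (ne_of_gt (productPoisson_pos (hcpos t ht) _)), mul_one]
    choose g hg using hcD
    -- Step 3: the master identity.
    have master : ∀ x : Fin d → ℕ,
        ∑ k, κ k * ((monPow (c t) (y k) / monPow (c t) (y' k)) * fallPow x (y' k)
            - fallPow x (y k))
        = ∑ i, ((x i : ℝ) * (g i / c t i) - g i) := by
      intro x
      have hL : HasDerivWithinAt (fun s => ∑ i, ((x i : ℝ) * Real.log (c s i) - c s i))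
          (∑ i, ((x i : ℝ) * (g i / c t i) - g i)) (Set.Ici 0) t := by
        refine HasDerivWithinAt.fun_sum fun i _ => ?_
        have hlog : HasDerivWithinAt (fun s => Real.log (c s i)) (g i / c t i) (Set.Ici 0) t :=
          (hg i).log (ne_of_gt (hcpos t ht i))
        exact (hlog.const_mul ((x i : ℝ))).sub (hg i)
      have hF := (hL.exp).mul_const (∏ i, ((x i).factorial : ℝ))⁻¹
      have hFP : HasDerivWithinAt (P x)
          (Real.exp (∑ i, ((x i : ℝ) * Real.log (c t i) - c t i))
            * (∑ i, ((x i : ℝ) * (g i / c t i) - g i))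
            * (∏ i, ((x i).factorial : ℝ))⁻¹)
          (Set.Ici 0) t := by
        refine hF.congr (fun s hs => ?_) ?_
        · have hs' : s ≥ (0:ℝ) := hs
          rw [hPoisson x s hs', productPoisson_exp_form (hcpos s hs')]
        · rw [hPoisson x t ht, productPoisson_exp_form (hcpos t ht)]
      have h1 := (hB x t ht).derivWithin ((uniqueDiffOn_Ici (0:ℝ)) t ht')
      have h2 := hFP.derivWithin ((uniqueDiffOn_Ici (0:ℝ)) t ht')
      have heq := h1.symm.trans h2
      have hPP := productPoisson_exp_form (hcpos t ht) x
      have hPPpos := productPoisson_pos (hcpos t ht) x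
      have hfin : (∑ k, κ k * ((monPow (c t) (y k) / monPow (c t) (y' k)) * fallPow x (y' k)
              - fallPow x (y k))) * productPoisson (c t) x
          = (∑ i, ((x i : ℝ) * (g i / c t i) - g i)) * productPoisson (c t) x := by
        rw [heq, hPP]
        ring
      exact mul_right_cancel₀ (ne_of_gt hPPpos) hfin
    -- Step 4: extract coefficients.
    set a : (Fin d → ℕ) → ℝ := fun z =>
      (∑ k ∈ univ.filter (fun k => y' k = z),
          κ k * (monPow (c t) (y k) / monPow (c t) (y' k)))
        - (∑ k ∈ univ.filter (fun k => y k = z), κ k)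
        - (∑ i ∈ univ.filter (fun i => eV i = z), g i / c t i)
        + (if (fun _ => 0 : Fin d → ℕ) = z then (∑ i, g i) else 0) with ha
    have hzero : ∀ x : Fin d → ℕ, ∑ z ∈ S, a z * fallPow x z = 0 := by
      intro x
      have p1 : ∑ z ∈ S, (∑ k ∈ univ.filter (fun k => y' k = z),
            κ k * (monPow (c t) (y k) / monPow (c t) (y' k))) * fallPow x z
          = ∑ k, κ k * (monPow (c t) (y k) / monPow (c t) (y' k)) * fallPow x (y' k) := by
        rw [← Finset.sum_fiberwise_of_maps_to (fun k _ => hy'S k)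
          (fun k => κ k * (monPow (c t) (y k) / monPow (c t) (y' k)) * fallPow x (y' k))]
        refine Finset.sum_congr rfl fun z _ => ?_
        rw [Finset.sum_mul]
        refine Finset.sum_congr rfl fun k hk => ?_
        rw [(Finset.mem_filter.1 hk).2]
      have p2 : ∑ z ∈ S, (∑ k ∈ univ.filter (fun k => y k = z), κ k) * fallPow x z
          = ∑ k, κ k * fallPow x (y k) := by
        rw [← Finset.sum_fiberwise_of_maps_to (fun k _ => hyS k)
          (fun k => κ k * fallPow x (y k))]
        refine Finset.sum_congr rfl fun z _ => ?_
        rw [Finset.sum_mul]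
        refine Finset.sum_congr rfl fun k hk => ?_
        rw [(Finset.mem_filter.1 hk).2]
      have p3 : ∑ z ∈ S, (∑ i ∈ univ.filter (fun i => eV i = z), g i / c t i) * fallPow x z
          = ∑ i, (g i / c t i) * (x i : ℝ) := by
        rw [← Finset.sum_fiberwise_of_maps_to (fun i _ => heVS i)
          (fun i => (g i / c t i) * (x i : ℝ))]
        refine Finset.sum_congr rfl fun z _ => ?_
        rw [Finset.sum_mul]
        refine Finset.sum_congr rfl fun i hi => ?_
        rw [← (Finset.mem_filter.1 hi).2, fallPow_eV]
      have p4 : ∑ z ∈ S, (if (fun _ => 0 : Fin d → ℕ) = z then (∑ i, g i) else 0) * fallPow x z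
          = ∑ i, g i := by
        rw [Finset.sum_eq_single (fun _ => 0 : Fin d → ℕ)]
        · rw [if_pos rfl, fallPow_zeroFun, mul_one]
        · intro z _ hne
          rw [if_neg (fun h => hne h.symm), zero_mul]
        · intro h; exact absurd hz0S h
      have expand : ∑ z ∈ S, a z * fallPow x z
          = (∑ z ∈ S, (∑ k ∈ univ.filter (fun k => y' k = z),
                κ k * (monPow (c t) (y k) / monPow (c t) (y' k))) * fallPow x z)
            - (∑ z ∈ S, (∑ k ∈ univ.filter (fun k => y k = z), κ k) * fallPow x z)
            - (∑ z ∈ S, (∑ i ∈ univ.filter (fun i => eV i = z), g i / c t i) * fallPow x z)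
            + (∑ z ∈ S, (if (fun _ => 0 : Fin d → ℕ) = z then (∑ i, g i) else 0) * fallPow x z) := by
        simp only [ha, sub_mul, add_mul, Finset.sum_sub_distrib, Finset.sum_add_distrib]
      rw [expand, p1, p2, p3, p4]
      have hx := master x
      have hL' : ∑ k, κ k * ((monPow (c t) (y k) / monPow (c t) (y' k)) * fallPow x (y' k)
              - fallPow x (y k))
          = (∑ k, κ k * (monPow (c t) (y k) / monPow (c t) (y' k)) * fallPow x (y' k))
            - ∑ k, κ k * fallPow x (y k) := by
        rw [← Finset.sum_sub_distrib]
        exact Finset.sum_congr rfl fun k _ => by ring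
      have hR' : ∑ i, ((x i : ℝ) * (g i / c t i) - g i)
          = (∑ i, (g i / c t i) * (x i : ℝ)) - ∑ i, g i := by
        rw [← Finset.sum_sub_distrib]
        exact Finset.sum_congr rfl fun i _ => by ring
      rw [hL', hR'] at hx
      linarith
    have hcoef := fallPow_indep S a hzero
    -- Part (iii): the DR condition at time t.
    have hDR : ∀ z : Fin d → ℕ, 2 ≤ ∑ i, z i →
        ∑ k ∈ univ.filter (fun k => y k = z), κ k * monPow (c t) z
          = ∑ k ∈ univ.filter (fun k => y' k = z), κ k * monPow (c t) (y k) := by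
      intro z hz2
      by_cases hzS : z ∈ S
      · have h0 := hcoef z hzS
        simp only [ha] at h0
        have hef : univ.filter (fun i => eV i = z) = ∅ := by
          rw [Finset.filter_eq_empty_iff]
          intro i _
          intro hei
          have : ∑ j, z j = 1 := by rw [← hei]; exact sum_eV i
          omega
        have hz0n : ¬((fun _ => 0 : Fin d → ℕ) = z) := by
          intro h
          rw [← h] at hz2
          simp at hz2
        rw [hef, Finset.sum_empty, if_neg hz0n] at h0
        have hEq : ∑ k ∈ univ.filter (fun k => y' k = z),
            κ k * (monPow (c t) (y k) / monPow (c t) (y' k))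
            = ∑ k ∈ univ.filter (fun k => y k = z), κ k := by linarith
        have hmz : monPow (c t) z ≠ 0 := ne_of_gt (monPow_pos (hcpos t ht) z)
        calc ∑ k ∈ univ.filter (fun k => y k = z), κ k * monPow (c t) z
            = (∑ k ∈ univ.filter (fun k => y k = z), κ k) * monPow (c t) z := by
              rw [Finset.sum_mul]
          _ = (∑ k ∈ univ.filter (fun k => y' k = z),
                κ k * (monPow (c t) (y k) / monPow (c t) (y' k))) * monPow (c t) z := by
              rw [hEq]
          _ = ∑ k ∈ univ.filter (fun k => y' k = z), κ k * monPow (c t) (y k) := by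
              rw [Finset.sum_mul]
              refine Finset.sum_congr rfl fun k hk => ?_
              rw [(Finset.mem_filter.1 hk).2]
              field_simp
      · have h1 : univ.filter (fun k => y k = z) = ∅ := by
          rw [Finset.filter_eq_empty_iff]
          intro k _ h
          exact hzS (h ▸ hyS k)
        have h2 : univ.filter (fun k => y' k = z) = ∅ := by
          rw [Finset.filter_eq_empty_iff]
          intro k _ h
          exact hzS (h ▸ hy'S k)
        rw [h1, h2, Finset.sum_empty, Finset.sum_empty]
    -- Part (i): the mass-action ODE at time t.
    have hODE : ∀ j, g j = ∑ k, κ k * monPow (c t) (y k) * ((y' k j : ℝ) - (y k j : ℝ)) := by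
      intro j
      have key : ∀ z ∈ S, (z j : ℝ) *
          ((∑ k ∈ univ.filter (fun k => y' k = z), κ k * monPow (c t) (y k))
            - ∑ k ∈ univ.filter (fun k => y k = z), κ k * monPow (c t) (y k))
          = (if eV j = z then g j else 0) := by
        intro z hzS
        have h0 := hcoef z hzS
        simp only [ha] at h0
        have hmz : monPow (c t) z ≠ 0 := ne_of_gt (monPow_pos (hcpos t ht) z)
        have hA : ∑ k ∈ univ.filter (fun k => y' k = z), κ k * monPow (c t) (y k)
            = (∑ k ∈ univ.filter (fun k => y' k = z),
                κ k * (monPow (c t) (y k) / monPow (c t) (y' k))) * monPow (c t) z := by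
          rw [Finset.sum_mul]
          refine Finset.sum_congr rfl fun k hk => ?_
          rw [(Finset.mem_filter.1 hk).2]
          field_simp
        have hBz : ∑ k ∈ univ.filter (fun k => y k = z), κ k * monPow (c t) (y k)
            = (∑ k ∈ univ.filter (fun k => y k = z), κ k) * monPow (c t) z := by
          rw [Finset.sum_mul]
          refine Finset.sum_congr rfl fun k hk => ?_
          rw [(Finset.mem_filter.1 hk).2]
        have h0' : (∑ k ∈ univ.filter (fun k => y' k = z),
              κ k * (monPow (c t) (y k) / monPow (c t) (y' k)))
            - (∑ k ∈ univ.filter (fun k => y k = z), κ k)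
            = (∑ i ∈ univ.filter (fun i => eV i = z), g i / c t i)
              - (if (fun _ => 0 : Fin d → ℕ) = z then (∑ i, g i) else 0) := by linarith
        rw [hA, hBz, ← sub_mul, h0']
        by_cases hex : ∃ i₀, eV i₀ = z
        · obtain ⟨i₀, hi₀⟩ := hex
          have hfil : univ.filter (fun i => eV i = z) = {i₀} := by
            ext i
            simp only [Finset.mem_filter, mem_univ, true_and, Finset.mem_singleton]
            constructor
            · intro h; exact eV_inj (h.trans hi₀.symm)
            · intro h; rw [h, hi₀]
          have hz0n : ¬((fun _ => 0 : Fin d → ℕ) = z) := by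
            rw [← hi₀]
            intro h
            have := congrFun h i₀
            simp [eV] at this
          rw [hfil, Finset.sum_singleton, if_neg hz0n, sub_zero, ← hi₀, monPow_eV]
          have hcc : g i₀ / c t i₀ * c t i₀ = g i₀ :=
            div_mul_cancel₀ _ (ne_of_gt (hcpos t ht i₀))
          rw [hcc]
          by_cases hji : j = i₀
          · subst hji
            simp [eV]
          · have h1 : eV i₀ j = 0 := by simp [eV, hji]
            have h2 : ¬(eV j = eV i₀) := fun h => hji (eV_inj h)
            rw [h1, if_neg h2]
            norm_num
        · push_neg at hex
          have hfil : univ.filter (fun i => eV i = z) = ∅ := by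
            rw [Finset.filter_eq_empty_iff]
            intro i _
            exact hex i
          rw [hfil, Finset.sum_empty, if_neg (hex j)]
          by_cases hz0 : (fun _ => 0 : Fin d → ℕ) = z
          · rw [if_pos hz0, ← hz0]
            norm_num
          · rw [if_neg hz0]
            norm_num
      have hfib1 : ∑ z ∈ S, (z j : ℝ) * ∑ k ∈ univ.filter (fun k => y' k = z),
            κ k * monPow (c t) (y k)
          = ∑ k, (y' k j : ℝ) * (κ k * monPow (c t) (y k)) := by
        rw [← Finset.sum_fiberwise_of_maps_to (fun k _ => hy'S k)
          (fun k => (y' k j : ℝ) * (κ k * monPow (c t) (y k)))]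
        refine Finset.sum_congr rfl fun z _ => ?_
        rw [Finset.mul_sum]
        refine Finset.sum_congr rfl fun k hk => ?_
        rw [(Finset.mem_filter.1 hk).2]
      have hfib2 : ∑ z ∈ S, (z j : ℝ) * ∑ k ∈ univ.filter (fun k => y k = z),
            κ k * monPow (c t) (y k)
          = ∑ k, (y k j : ℝ) * (κ k * monPow (c t) (y k)) := by
        rw [← Finset.sum_fiberwise_of_maps_to (fun k _ => hyS k)
          (fun k => (y k j : ℝ) * (κ k * monPow (c t) (y k)))]
        refine Finset.sum_congr rfl fun z _ => ?_
        rw [Finset.mul_sum]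
        refine Finset.sum_congr rfl fun k hk => ?_
        rw [(Finset.mem_filter.1 hk).2]
      calc g j = if eV j ∈ S then g j else 0 := by rw [if_pos (heVS j)]
        _ = ∑ z ∈ S, (if eV j = z then g j else 0) := by
            rw [Finset.sum_ite_eq S (eV j) (fun _ => g j)]
        _ = ∑ z ∈ S, (z j : ℝ) *
            ((∑ k ∈ univ.filter (fun k => y' k = z), κ k * monPow (c t) (y k))
              - ∑ k ∈ univ.filter (fun k => y k = z), κ k * monPow (c t) (y k)) :=
            (Finset.sum_congr rfl key).symm
        _ = (∑ z ∈ S, (z j : ℝ) * ∑ k ∈ univ.filter (fun k => y' k = z),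
              κ k * monPow (c t) (y k))
            - ∑ z ∈ S, (z j : ℝ) * ∑ k ∈ univ.filter (fun k => y k = z),
              κ k * monPow (c t) (y k) := by
            rw [← Finset.sum_sub_distrib]
            exact Finset.sum_congr rfl fun z _ => by ring
        _ = (∑ k, (y' k j : ℝ) * (κ k * monPow (c t) (y k)))
            - ∑ k, (y k j : ℝ) * (κ k * monPow (c t) (y k)) := by rw [hfib1, hfib2]
        _ = ∑ k, κ k * monPow (c t) (y k) * ((y' k j : ℝ) - (y k j : ℝ)) := by
            rw [← Finset.sum_sub_distrib]
            exact Finset.sum_congr rfl fun k _ => by ring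
    refine ⟨?_, hDR⟩
    refine hasDerivWithinAt_pi.2 fun j => ?_
    have hm : massActionRHS κ y y' (c t) j
        = ∑ k, κ k * monPow (c t) (y k) * ((y' k j : ℝ) - (y k j : ℝ)) := by
      unfold massActionRHS zetaVec
      rw [Finset.sum_apply]
      refine Finset.sum_congr rfl fun k _ => ?_
      simp [smul_eq_mul]
    rw [hm, ← hODE j]
    exact hg j
  exact ⟨fun t ht => (main t ht).1, fun z hz t ht => (main t ht).2 z hz⟩
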